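/- Let c_1, …, c_T be a simplex coding in ℝ^{T−1}, T ≥ 2, let ρ_1, …, ρ_T be nonnegative reals with ∑_{y=1}^T ρ_y = 1, and let b satisfy ρ_b = max_y ρ_y. Define the SH-SVM conditional risk C(α) = ∑_{y=1}^T ρ_y max(0, 1 − ⟨c_y, α⟩). Then: (i) the code vector c_b minimizes C over the convex hull conv{c_1, …, c_T} (Fisher consistency of the SH-SVM loss restricted to the convex hull of the codes); and (ii) for every α ∈ conv{c_1, …, c_T} and every label D(α) with ⟨c_{D(α)}, α⟩ = max_y ⟨c_y, α⟩, one has ρ_b − ρ_{D(α)} ≤ (T−1)(C(α) − C(c_b)). -/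

import Mathlib

open scoped RealInnerProductSpace

lemma exists_weights_of_mem_convexHull_range {T : ℕ}
    (c : Fin T → EuclideanSpace ℝ (Fin (T - 1)))
    {α : EuclideanSpace ℝ (Fin (T - 1))} (h : α ∈ convexHull ℝ (Set.range c)) :
    ∃ w : Fin T → ℝ, (∀ i, 0 ≤ w i) ∧ (∑ i, w i) = 1 ∧ α = ∑ i, w i • c i := by
  rw [convexHull_range_eq_exists_affineCombination] at h
  obtain ⟨s, w, h0, h1, rfl⟩ := h
  refine ⟨fun i => if i ∈ s then w i else 0, ?_, ?_, ?_⟩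
  · intro i; dsimp only; split
    · exact h0 i ‹_›
    · exact le_refl 0
  · simp only [Finset.sum_ite_mem, Finset.univ_inter, h1]
  · rw [Finset.affineCombination_eq_linear_combination s c w h1]
    have : ∑ i : Fin T, (if i ∈ s then w i else 0) • c i = ∑ i ∈ s, (if i ∈ s then w i else 0) • c i :=
      (Finset.sum_subset (Finset.subset_univ s) (fun i _ hi => by simp [hi])).symm
    rw [this]
    exact Finset.sum_congr rfl (fun i hi => by simp [hi])

/-- Fisher consistency and pointwise comparison for the simplex half-space
SVM loss restricted to the convex hull of the codes: if `b` maximizes `ρ` and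
`C(α) = ∑ y, ρ y max(0, 1 - ⟪c y, α⟫)`, then (i) `c b` minimizes `C` over
`conv{c 1, …, c T}`, and (ii) for every `α` in the convex hull and every label `D α`
maximizing `y ↦ ⟪c y, α⟫`, `ρ b - ρ (D α) ≤ (T-1)(C α - C (c b))`. -/
theorem simplex_halfspace_svm_consistency_and_comparison (T : ℕ) (hT : 2 ≤ T)
    (c : Fin T → EuclideanSpace ℝ (Fin (T - 1)))
    (hnorm : ∀ y, ‖c y‖ = 1)
    (hinner : ∀ y y', y ≠ y' → ⟪c y, c y'⟫ = -(1 / ((T : ℝ) - 1)))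
    (hsum : ∑ y, c y = 0)
    (ρ : Fin T → ℝ) (hρ : ∀ y, 0 ≤ ρ y) (hρsum : ∑ y, ρ y = 1)
    (b : Fin T) (hb : ∀ y, ρ y ≤ ρ b)
    (C : EuclideanSpace ℝ (Fin (T - 1)) → ℝ)
    (hC : ∀ α, C α = ∑ y, ρ y * max 0 (1 - ⟪c y, α⟫)) :
    (∀ α ∈ convexHull ℝ (Set.range c), C (c b) ≤ C α) ∧
    (∀ α ∈ convexHull ℝ (Set.range c), ∀ D : Fin T, (∀ y, ⟪c y, α⟫ ≤ ⟪c D, α⟫) →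
      ρ b - ρ D ≤ ((T : ℝ) - 1) * (C α - C (c b))) := by
  set t : ℝ := (T : ℝ) with ht
  have ht2 : (2 : ℝ) ≤ t := by rw [ht]; exact_mod_cast hT
  have htm : (0 : ℝ) < t - 1 := by linarith
  set d : ℝ := -(1 / (t - 1)) with hd
  have hd1 : 1 - d = t / (t - 1) := by rw [hd]; field_simp; ring
  have hdpos : 0 < 1 - d := by rw [hd1]; positivity
  have hself : ∀ y, ⟪c y, c y⟫ = 1 := by
    intro y
    rw [real_inner_self_eq_norm_sq, hnorm y, one_pow]
  have hcyz : ∀ y z, ⟪c y, c z⟫ = if z = y then 1 else d := by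
    intro y z
    by_cases h : z = y
    · simp [h, hself, hnorm]
    · rw [if_neg h, hinner y z (fun hh => h hh.symm)]
  -- key inner product computation
  have key : ∀ (w : Fin T → ℝ), (∑ z, w z) = 1 → ∀ y,
      ⟪c y, ∑ z, w z • c z⟫ = w y * (1 - d) + d := by
    intro w hw y
    rw [inner_sum]
    simp_rw [real_inner_smul_right, hcyz y]
    calc ∑ z, w z * (if z = y then 1 else d)
        = ∑ z, ((if z = y then w z * (1 - d) else 0) + w z * d) := by
          refine Finset.sum_congr rfl (fun z _ => ?_)
          by_cases h : z = y <;> simp [h] <;> ring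
      _ = w y * (1 - d) + d := by
          rw [Finset.sum_add_distrib, Finset.sum_ite_eq' Finset.univ y, ← Finset.sum_mul, hw]
          simp
  -- C formula on convex combinations
  have Cform : ∀ w : Fin T → ℝ, (∀ i, 0 ≤ w i) → (∑ i, w i) = 1 →
      C (∑ z, w z • c z) = (1 - d) * (1 - ∑ y, ρ y * w y) := by
    intro w hw0 hw1
    have hwle : ∀ y, w y ≤ 1 := by
      intro y
      rw [← hw1]
      exact Finset.single_le_sum (fun i _ => hw0 i) (Finset.mem_univ y)
    rw [hC]
    have hmax : ∀ y, ρ y * max 0 (1 - ⟪c y, ∑ z, w z • c z⟫) = ρ y * ((1 - d) * (1 - w y)) := by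
      intro y
      rw [key w hw1 y, max_eq_right]
      · ring_nf
      · nlinarith [hwle y, hdpos]
    simp_rw [hmax]
    calc ∑ y, ρ y * ((1 - d) * (1 - w y)) = (1 - d) * ∑ y, (ρ y - ρ y * w y) := by
          rw [Finset.mul_sum]; exact Finset.sum_congr rfl (fun y _ => by ring)
      _ = (1 - d) * (1 - ∑ y, ρ y * w y) := by rw [Finset.sum_sub_distrib, hρsum]
  -- C at a code vector
  have hcb : ∀ a : Fin T, c a = ∑ z, (if z = a then (1 : ℝ) else 0) • c z := by
    intro a
    simp [ite_smul]
  have Ccode : ∀ a : Fin T, C (c a) = (1 - d) * (1 - ρ a) := by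
    intro a
    rw [hcb a, Cform _ (fun i => by positivity) (by simp)]
    congr 2
    simp
  constructor
  · intro α hα
    obtain ⟨w, hw0, hw1, rfl⟩ := exists_weights_of_mem_convexHull_range c hα
    rw [Cform w hw0 hw1, Ccode b]
    have hS : ∑ y, ρ y * w y ≤ ρ b := by
      calc ∑ y, ρ y * w y ≤ ∑ y, ρ b * w y :=
            Finset.sum_le_sum (fun y _ => mul_le_mul_of_nonneg_right (hb y) (hw0 y))
        _ = ρ b := by rw [← Finset.mul_sum, hw1, mul_one]
    nlinarith
  · intro α hα D hD
    obtain ⟨w, hw0, hw1, rfl⟩ := exists_weights_of_mem_convexHull_range c hα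
    have hwD : ∀ y, w y ≤ w D := by
      intro y
      have := hD y
      rw [key w hw1 y, key w hw1 D] at this
      nlinarith
    have hDge : 1 ≤ t * w D := by
      have : (1 : ℝ) = ∑ z, w z := hw1.symm
      have h2 : ∑ z : Fin T, w z ≤ ∑ z : Fin T, w D :=
        Finset.sum_le_sum (fun z _ => hwD z)
      have h3 : ∑ z : Fin T, w D = t * w D := by
        rw [Finset.sum_const, Finset.card_univ, Fintype.card_fin, nsmul_eq_mul, ht]
      linarith [hw1, h2, h3.symm.le]
    have hS : ∑ y, ρ y * w y ≤ ρ D * w D + ρ b * (1 - w D) := by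
      have hsplit : ∑ y, ρ y * w y = ρ D * w D + ∑ y ∈ Finset.univ.erase D, ρ y * w y := by
        rw [← Finset.sum_erase_add Finset.univ _ (Finset.mem_univ D)]; ring
      have herase : ∑ y ∈ Finset.univ.erase D, ρ y * w y ≤ ρ b * (1 - w D) := by
        have h4 : ∑ y ∈ Finset.univ.erase D, w y = 1 - w D := by
          have := Finset.sum_erase_add Finset.univ w (Finset.mem_univ D)
          rw [hw1] at this
          linarith
        calc ∑ y ∈ Finset.univ.erase D, ρ y * w y
            ≤ ∑ y ∈ Finset.univ.erase D, ρ b * w y :=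
              Finset.sum_le_sum (fun y _ => mul_le_mul_of_nonneg_right (hb y) (hw0 y))
          _ = ρ b * (1 - w D) := by rw [← Finset.mul_sum, h4]
      linarith [hsplit, herase]
    rw [Cform w hw0 hw1, Ccode b]
    have hkey : (t - 1) * (1 - d) = t := by rw [hd1]; field_simp
    have hbD : ρ D ≤ ρ b := hb D
    have heq : (t - 1) * ((1 - d) * (1 - ∑ y, ρ y * w y) - (1 - d) * (1 - ρ b))
        = t * (ρ b - ∑ y, ρ y * w y) := by
      linear_combination (ρ b - ∑ y, ρ y * w y) * hkey
    rw [heq]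
    nlinarith [mul_nonneg (by linarith : (0:ℝ) ≤ t * w D - 1) (by linarith : (0:ℝ) ≤ ρ b - ρ D),
      mul_nonneg (by linarith : (0:ℝ) ≤ t) (by linarith : (0:ℝ) ≤ ρ D * w D + ρ b * (1 - w D) - ∑ y, ρ y * w y)]
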